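/- Each lock Kohnert diagram has a unique lock Kohnert tableau labeling: condition (1) determines the multiset of labels in each column and condition (4) determines their order, so for any lock Kohnert diagram D of content a there is at most one lock Kohnert tableau of content a with underlying diagram D. -/
import Mathlib


open scoped Classical

/-- A Kohnert move: take the rightmost cell of row `r` and move it down in its
column to the highest open row `r'` below (rows indexed from 1). Cells are `(row, column)`. -/
def KohnertMove (D D' : Finset (ℕ × ℕ)) : Prop :=
  ∃ r c r', (r, c) ∈ D ∧ (∀ c', (r, c') ∈ D → c' ≤ c) ∧
    1 ≤ r' ∧ r' < r ∧ (r', c) ∉ D ∧ (∀ r'', r' < r'' → r'' < r → (r'', c) ∈ D) ∧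
    D' = insert (r', c) (D.erase (r, c))

/-- The largest part of a weak composition. -/
def maxPart (a : List ℕ) : ℕ := a.foldr max 0

/-- Number of cells of a diagram in row `i`. -/
def rowWeight (D : Finset (ℕ × ℕ)) (i : ℕ) : ℕ :=
  (D.filter (fun p => p.1 = i)).card

/-- The weight of a diagram, as a finitely supported function recording the
number of cells in each row. -/
noncomputable def wtF (D : Finset (ℕ × ℕ)) : ℕ →₀ ℕ := ∑ p ∈ D, Finsupp.single p.1 1

/-- The exponent vector `x^a` of a weak composition `a` (1-based variables). -/
noncomputable def compFinsupp (a : List ℕ) : ℕ →₀ ℕ :=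
  ∑ i ∈ Finset.range a.length, Finsupp.single (i + 1) (a.getD i 0)

/-- A labeled diagram is a finite set of triples `(row, column, label)`. The
underlying diagram forgets the labels. -/
def Tcells (T : Finset (ℕ × ℕ × ℕ)) : Finset (ℕ × ℕ) := T.image (fun t => (t.1, t.2.1))

/-- The weight of a labeled diagram records the number of cells in each row. -/
noncomputable def wtT (T : Finset (ℕ × ℕ × ℕ)) : ℕ →₀ ℕ := ∑ t ∈ T, Finsupp.single t.1 1

/-- Lock Kohnert tableau of content `a`: one label per cell; exactly one `i` in
each column from `max(a) - a_i + 1` through `max(a)`; entries in row `r` are at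
least `r` (and labels lie in `1..n`); cells with a fixed label weakly descend
from left to right; labels strictly decrease down columns. -/
def IsLKTF (a : List ℕ) (T : Finset (ℕ × ℕ × ℕ)) : Prop :=
  (∀ t ∈ T, ∀ t' ∈ T, t.1 = t'.1 → t.2.1 = t'.2.1 → t = t') ∧
  (∀ i ∈ Finset.Icc 1 a.length, ∀ c : ℕ,
      (T.filter (fun t => t.2.1 = c ∧ t.2.2 = i)).card =
        if maxPart a - a.getD (i - 1) 0 < c ∧ c ≤ maxPart a then 1 else 0) ∧
  (∀ t ∈ T, 1 ≤ t.1 ∧ t.1 ≤ t.2.2 ∧ 1 ≤ t.2.2 ∧ t.2.2 ≤ a.length) ∧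
  (∀ t ∈ T, ∀ t' ∈ T, t.2.2 = t'.2.2 → t.2.1 < t'.2.1 → t'.1 ≤ t.1) ∧
  (∀ t ∈ T, ∀ t' ∈ T, t.2.1 = t'.2.1 → t.1 < t'.1 → t.2.2 < t'.2.2)

/-- `flat(a)`: the nonzero parts of `a`, in order. -/
def flatC (a : List ℕ) : List ℕ := a.filter (fun x => x ≠ 0)

noncomputable def colLabels (T : Finset (ℕ × ℕ × ℕ)) (c : ℕ) : Finset ℕ :=
  (T.filter (fun t => t.2.1 = c)).image (fun t => t.2.2)

lemma colLabels_char (a : List ℕ) (T : Finset (ℕ × ℕ × ℕ)) (hT : IsLKTF a T)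
    (c i : ℕ) : i ∈ colLabels T c ↔
      (1 ≤ i ∧ i ≤ a.length ∧ maxPart a - a.getD (i - 1) 0 < c ∧ c ≤ maxPart a) := by
  obtain ⟨h1, h2, h3, h4, h5⟩ := hT
  constructor
  · intro hi
    simp only [colLabels, Finset.mem_image, Finset.mem_filter] at hi
    obtain ⟨t, ⟨htT, htc⟩, hti⟩ := hi
    obtain ⟨-, -, hl1, hl2⟩ := h3 t htT
    have hcard := h2 i (by simp [Finset.mem_Icc, hti ▸ hl1, hti ▸ hl2]) c
    have hpos : 0 < (T.filter (fun t => t.2.1 = c ∧ t.2.2 = i)).card :=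
      Finset.card_pos.mpr ⟨t, by simp [Finset.mem_filter, htT, htc, hti]⟩
    rw [hcard] at hpos
    split_ifs at hpos with hc
    · exact ⟨hti ▸ hl1, hti ▸ hl2, hc.1, hc.2⟩
    · omega
  · rintro ⟨hi1, hi2, hc1, hc2⟩
    have hcard := h2 i (by simp [Finset.mem_Icc, hi1, hi2]) c
    rw [if_pos ⟨hc1, hc2⟩] at hcard
    obtain ⟨t, ht⟩ := Finset.card_pos.mp (by omega : 0 < (T.filter (fun t => t.2.1 = c ∧ t.2.2 = i)).card)
    simp only [Finset.mem_filter] at ht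
    exact Finset.mem_image.mpr ⟨t, Finset.mem_filter.mpr ⟨ht.1, ht.2.1⟩, ht.2.2⟩

lemma col_label_inj (a : List ℕ) (T : Finset (ℕ × ℕ × ℕ)) (hT : IsLKTF a T)
    {t t' : ℕ × ℕ × ℕ} (ht : t ∈ T) (ht' : t' ∈ T) (hc : t.2.1 = t'.2.1)
    (hl : t.2.2 = t'.2.2) : t = t' := by
  obtain ⟨h1, h2, h3, h4, h5⟩ := hT
  rcases lt_trichotomy t.1 t'.1 with hr | hr | hr
  · exact absurd (h5 t ht t' ht' hc hr) (by omega)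
  · exact h1 t ht t' ht' hr hc
  · exact absurd (h5 t' ht' t ht hc.symm hr) (by omega)

lemma count_below (a : List ℕ) (T : Finset (ℕ × ℕ × ℕ)) (hT : IsLKTF a T)
    (r c i : ℕ) (ht : (r, c, i) ∈ T) :
    ((colLabels T c).filter (fun j => j < i)).card
      = (T.filter (fun t => t.2.1 = c ∧ t.1 < r)).card := by
  have hset : (colLabels T c).filter (fun j => j < i)
      = (T.filter (fun t => t.2.1 = c ∧ t.1 < r)).image (fun t => t.2.2) := by
    ext j
    simp only [Finset.mem_filter, Finset.mem_image, colLabels]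
    constructor
    · rintro ⟨⟨t, ⟨htT, htc⟩, htj⟩, hj⟩
      refine ⟨t, ⟨htT, htc, ?_⟩, htj⟩
      rcases lt_trichotomy t.1 r with hr | hr | hr
      · exact hr
      · have := hT.1 t htT (r, c, i) ht hr htc
        rw [this] at htj; simp only at htj; omega
      · have := hT.2.2.2.2 (r, c, i) ht t htT htc.symm hr
        simp only at this; omega
    · rintro ⟨t, ⟨htT, htc, htr⟩, htj⟩
      have := hT.2.2.2.2 t htT (r, c, i) ht htc htr
      simp only at this
      exact ⟨⟨t, ⟨htT, htc⟩, htj⟩, by omega⟩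
  rw [hset]
  apply Finset.card_image_of_injOn
  intro t htm t' htm' hl
  simp only [Finset.mem_coe, Finset.mem_filter] at htm htm'
  exact col_label_inj a T hT htm.1 htm'.1 (htm.2.1.trans htm'.2.1.symm) hl

lemma filter_card_cells (T : Finset (ℕ × ℕ × ℕ))
    (h1 : ∀ t ∈ T, ∀ t' ∈ T, t.1 = t'.1 → t.2.1 = t'.2.1 → t = t')
    (p : ℕ × ℕ → Prop) :
    (T.filter (fun t => p (t.1, t.2.1))).card = ((Tcells T).filter p).card := by
  have hset : (Tcells T).filter p = (T.filter (fun t => p (t.1, t.2.1))).image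
      (fun t => (t.1, t.2.1)) := by
    ext q
    simp only [Finset.mem_filter, Finset.mem_image, Tcells]
    constructor
    · rintro ⟨⟨t, htT, rfl⟩, hq⟩
      exact ⟨t, ⟨htT, hq⟩, rfl⟩
    · rintro ⟨t, ⟨htT, hp⟩, rfl⟩
      exact ⟨⟨t, htT, rfl⟩, hp⟩
  rw [hset, Finset.card_image_of_injOn]
  intro t htm t' htm' he
  simp only [Finset.mem_coe, Finset.mem_filter] at htm htm'
  have he' : (t.1, t.2.1) = (t'.1, t'.2.1) := he
  exact h1 t htm.1 t' htm'.1 (Prod.ext_iff.mp he').1 (Prod.ext_iff.mp he').2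

lemma lkt_subset (a : List ℕ) (T T' : Finset (ℕ × ℕ × ℕ))
    (hT : IsLKTF a T) (hT' : IsLKTF a T') (h : Tcells T = Tcells T') : T ⊆ T' := by
  rintro ⟨r, c, i⟩ ht
  have hcell : (r, c) ∈ Tcells T' := by
    rw [← h]
    exact Finset.mem_image.mpr ⟨(r, c, i), ht, rfl⟩
  obtain ⟨t', ht', he⟩ := Finset.mem_image.mp hcell
  obtain ⟨r₀, c₀, i'⟩ := t'
  obtain ⟨he1, he2⟩ : r₀ = r ∧ c₀ = c := by
    simpa [Prod.ext_iff] using he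
  rw [he1, he2] at ht'
  -- label sets equal
  have hL : colLabels T c = colLabels T' c := by
    ext j
    rw [colLabels_char a T hT, colLabels_char a T' hT']
  -- counts below equal
  have hcnt : (T.filter (fun t => t.2.1 = c ∧ t.1 < r)).card
      = (T'.filter (fun t => t.2.1 = c ∧ t.1 < r)).card := by
    have e1 := filter_card_cells T hT.1 (fun q => q.2 = c ∧ q.1 < r)
    have e2 := filter_card_cells T' hT'.1 (fun q => q.2 = c ∧ q.1 < r)
    rw [h] at e1
    have := e1.trans e2.symm
    convert this
  have key : ((colLabels T c).filter (fun j => j < i)).card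
      = ((colLabels T c).filter (fun j => j < i')).card := by
    rw [count_below a T hT r c i ht, hL, count_below a T' hT' r c i' ht', hcnt]
  have hiL : i ∈ colLabels T c :=
    Finset.mem_image.mpr ⟨(r, c, i), Finset.mem_filter.mpr ⟨ht, rfl⟩, rfl⟩
  have hi'L : i' ∈ colLabels T c := by
    rw [hL]
    exact Finset.mem_image.mpr ⟨(r, c, i'), Finset.mem_filter.mpr ⟨ht', rfl⟩, rfl⟩
  have : i = i' := by
    by_contra hne
    rcases lt_or_gt_of_ne hne with hlt | hlt
    · have hss : (colLabels T c).filter (fun j => j < i)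
          ⊂ (colLabels T c).filter (fun j => j < i') := by
        refine ⟨fun j hj => ?_, fun hsub => ?_⟩
        · simp only [Finset.mem_filter] at hj ⊢
          exact ⟨hj.1, by omega⟩
        · have := hsub (Finset.mem_filter.mpr ⟨hiL, hlt⟩)
          simp only [Finset.mem_filter] at this; omega
      exact absurd key (Nat.ne_of_lt (Finset.card_lt_card hss))
    · have hss : (colLabels T c).filter (fun j => j < i')
          ⊂ (colLabels T c).filter (fun j => j < i) := by
        refine ⟨fun j hj => ?_, fun hsub => ?_⟩
        · simp only [Finset.mem_filter] at hj ⊢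
          exact ⟨hj.1, by omega⟩
        · have := hsub (Finset.mem_filter.mpr ⟨hi'L, hlt⟩)
          simp only [Finset.mem_filter] at this; omega
      exact absurd key.symm (Nat.ne_of_lt (Finset.card_lt_card hss))
  rw [this]; exact ht'

/-- A lock Kohnert diagram admits at most one lock Kohnert tableau labeling:
two lock Kohnert tableaux of content `a` with the same underlying diagram coincide. -/
theorem lkt_labeling_unique (a : List ℕ) (T T' : Finset (ℕ × ℕ × ℕ))
    (hT : IsLKTF a T) (hT' : IsLKTF a T') (h : Tcells T = Tcells T') :
    T = T' :=
  Finset.Subset.antisymm (lkt_subset a T T' hT hT' h) (lkt_subset a T' T hT' hT h.symm)
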